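/- arXiv:2505.15509 — 3 statements merged into one kernel-verified Lean document; each statement's English description precedes it below -/
import Mathlib

section
/- Let B ⊆ ℝ^d and A ⊆ ℝ^m be open and nonempty, let g : B → A be intrinsic Lipschitz with constant L_g, and f : A → ℝ^k be intrinsic Lipschitz with constant L_f. Then f ∘ g : B → ℝ^k is intrinsic Lipschitz with constant L_f · L_g. -/
open scoped ENNReal NNReal

/-- The length (total variation) of a continuous path `γ` on `[0,1]`, valued in `[0,∞]`. -/
noncomputable def pathLength {E : Type*} [NormedAddCommGroup E] (γ : ℝ → E) : ℝ≥0∞ :=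
  eVariationOn γ (Set.Icc 0 1)

/-- The intrinsic metric of a set `A`: the infimum of lengths of continuous paths in `A`
joining two points. -/
noncomputable def intrinsicDist {E : Type*} [NormedAddCommGroup E]
    (A : Set E) (x y : E) : ℝ≥0∞ :=
  ⨅ (γ : ℝ → E) (_ : ContinuousOn γ (Set.Icc 0 1)) (_ : Set.MapsTo γ (Set.Icc 0 1) A)
    (_ : γ 0 = x) (_ : γ 1 = y), pathLength γ

/-- `f` is intrinsic Lipschitz continuous on `A` with constant `L`. -/
def IntrinsicLipWith {E F : Type*} [NormedAddCommGroup E] [PseudoEMetricSpace F]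
    (L : ℝ≥0) (f : E → F) (A : Set E) : Prop :=
  ∀ x ∈ A, ∀ y ∈ A, edist (f x) (f y) ≤ L * intrinsicDist A x y

section Aux
variable {E : Type*} [NormedAddCommGroup E]

lemma intrinsicDist_le {A : Set E} {x y : E} (γ : ℝ → E)
    (hc : ContinuousOn γ (Set.Icc 0 1)) (hm : Set.MapsTo γ (Set.Icc 0 1) A)
    (h0 : γ 0 = x) (h1 : γ 1 = y) : intrinsicDist A x y ≤ pathLength γ := by
  refine iInf_le_of_le γ ?_
  refine iInf_le_of_le hc ?_
  refine iInf_le_of_le hm ?_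
  exact iInf_le_of_le h0 (iInf_le _ h1)

lemma eVariationOn_id_Icc01 : eVariationOn (id : ℝ → ℝ) (Set.Icc 0 1) ≤ 1 := by
  have h := (monotoneOn_id (s := Set.Icc (0:ℝ) 1)).eVariationOn_le
      (a := 0) (b := 1) (by simp) (by simp)
  simpa using h

lemma intrinsicDist_le_edist_of_segment [NormedSpace ℝ E]
    {A : Set E} {x z : E} (h : segment ℝ x z ⊆ A) : intrinsicDist A x z ≤ edist x z := by
  set F : ℝ → E := fun t => x + t • (z - x) with hF
  have hFc : Continuous F := by continuity
  have hFm : Set.MapsTo F (Set.Icc 0 1) A := by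
    intro t ht
    exact h (by rw [segment_eq_image']; exact ⟨t, ht, rfl⟩)
  have hF0 : F 0 = x := by simp [hF]
  have hF1 : F 1 = z := by simp [hF]
  refine (intrinsicDist_le F hFc.continuousOn hFm hF0 hF1).trans ?_
  have hlip : LipschitzWith ‖z - x‖₊ F := by
    apply LipschitzWith.of_dist_le_mul
    intro a b
    have : F a - F b = (a - b) • (z - x) := by simp [hF]; module
    rw [dist_eq_norm, this, norm_smul, Real.norm_eq_abs, Real.dist_eq]
    simp [mul_comm, coe_nnnorm]
  calc pathLength F = eVariationOn (F ∘ id) (Set.Icc 0 1) := rfl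
    _ ≤ ‖z - x‖₊ * eVariationOn (id : ℝ → ℝ) (Set.Icc 0 1) :=
        (LipschitzWith.lipschitzOnWith (s := Set.univ) hlip).comp_eVariationOn_le (Set.mapsTo_univ _ _)
    _ ≤ ‖z - x‖₊ * 1 := mul_le_mul_right eVariationOn_id_Icc01 _
    _ = edist x z := by rw [mul_one, edist_comm, edist_nndist, nndist_eq_nnnorm]

lemma continuousOn_of_intrinsicLip [NormedSpace ℝ E] {F : Type*} [PseudoEMetricSpace F]
    {L : ℝ≥0} {g : E → F} {B : Set E} (hB : IsOpen B) (hg : IntrinsicLipWith L g B) :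
    ContinuousOn g B := by
  intro b hb
  obtain ⟨ε, εpos, hball⟩ := Metric.isOpen_iff.1 hB b hb
  have hlip : LipschitzOnWith L g (Metric.ball b ε) := by
    intro p hp q hq
    calc edist (g p) (g q) ≤ L * intrinsicDist B p q := hg p (hball hp) q (hball hq)
      _ ≤ L * edist p q := by
          refine mul_le_mul_right ?_ _
          exact intrinsicDist_le_edist_of_segment
            (((convex_ball b ε).segment_subset hp hq).trans hball)
  exact ((hlip.continuousOn).continuousAt (Metric.ball_mem_nhds b εpos)).continuousWithinAt

lemma intrinsicDist_le_eVariationOn {B : Set E} {γ : ℝ → E}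
    (hc : ContinuousOn γ (Set.Icc 0 1)) (hm : Set.MapsTo γ (Set.Icc 0 1) B)
    {s t : ℝ} (hs : s ∈ Set.Icc (0:ℝ) 1) (ht : t ∈ Set.Icc (0:ℝ) 1) (hst : s ≤ t) :
    intrinsicDist B (γ s) (γ t) ≤ eVariationOn γ (Set.Icc s t) := by
  set σ : ℝ → ℝ := fun u => s + u * (t - s) with hσ
  have hσmono : Monotone σ := by
    intro a b hab
    simp only [hσ]
    nlinarith [hst]
  have hσmaps : Set.MapsTo σ (Set.Icc 0 1) (Set.Icc s t) := by
    intro u hu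
    simp only [hσ, Set.mem_Icc] at hu ⊢
    constructor <;> nlinarith
  have hsub : Set.Icc s t ⊆ Set.Icc (0:ℝ) 1 := Set.Icc_subset_Icc hs.1 ht.2
  have hcont : ContinuousOn (γ ∘ σ) (Set.Icc 0 1) := by
    refine hc.comp ?_ fun u hu => hsub (hσmaps hu)
    exact (continuous_const.add (continuous_id.mul continuous_const)).continuousOn
  have h0 : (γ ∘ σ) 0 = γ s := by simp [hσ]
  have h1 : (γ ∘ σ) 1 = γ t := by simp [hσ]
  refine (intrinsicDist_le (γ ∘ σ) hcont (fun u hu => hm (hsub (hσmaps hu))) h0 h1).trans ?_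
  exact eVariationOn.comp_le_of_monotoneOn γ σ (hσmono.monotoneOn _) hσmaps

lemma chain_sum (γ : ℝ → E) (u : ℕ → ℝ) (hu : Monotone u) :
    ∀ n, ∑ i ∈ Finset.range n, eVariationOn γ (Set.Icc (u i) (u (i+1)))
      ≤ eVariationOn γ (Set.Icc (u 0) (u n)) := by
  intro n
  induction n with
  | zero => simp
  | succ n ih =>
    rw [Finset.sum_range_succ]
    calc _ ≤ eVariationOn γ (Set.Icc (u 0) (u n)) + eVariationOn γ (Set.Icc (u n) (u (n+1))) :=
          add_le_add_left ih _
      _ = eVariationOn γ (Set.Icc (u 0) (u (n+1))) := by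
          have h := eVariationOn.Icc_add_Icc γ (s := Set.univ)
            (hu (Nat.zero_le n)) (hu n.le_succ) (Set.mem_univ (u n))
          simpa using h

lemma comp_pathLength_le {F : Type*} [NormedAddCommGroup F]
    {L : ℝ≥0} {g : E → F} {B : Set E} (hg : IntrinsicLipWith L g B) {γ : ℝ → E}
    (hc : ContinuousOn γ (Set.Icc 0 1)) (hm : Set.MapsTo γ (Set.Icc 0 1) B) :
    pathLength (g ∘ γ) ≤ L * pathLength γ := by
  apply iSup_le _
  rintro ⟨n, u, hu, us⟩
  calc (∑ i ∈ Finset.range n, edist ((g ∘ γ) (u (i+1))) ((g ∘ γ) (u i)))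
      ≤ ∑ i ∈ Finset.range n, (L : ℝ≥0∞) * eVariationOn γ (Set.Icc (u i) (u (i+1))) := by
        refine Finset.sum_le_sum fun i _ => ?_
        calc edist ((g ∘ γ) (u (i+1))) ((g ∘ γ) (u i))
            = edist (g (γ (u i))) (g (γ (u (i+1)))) := edist_comm _ _
          _ ≤ L * intrinsicDist B (γ (u i)) (γ (u (i+1))) :=
              hg _ (hm (us i)) _ (hm (us (i+1)))
          _ ≤ L * eVariationOn γ (Set.Icc (u i) (u (i+1))) :=
              mul_le_mul_right (intrinsicDist_le_eVariationOn hc hm (us i) (us (i+1))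
                (hu (Nat.le_succ i))) _
    _ = L * ∑ i ∈ Finset.range n, eVariationOn γ (Set.Icc (u i) (u (i+1))) :=
        (Finset.mul_sum _ _ _).symm
    _ ≤ L * eVariationOn γ (Set.Icc (u 0) (u n)) := mul_le_mul_right (chain_sum γ u hu n) _
    _ ≤ L * pathLength γ := mul_le_mul_right
        (eVariationOn.mono γ (Set.Icc_subset_Icc (us 0).1 (us n).2)) _

lemma intrinsicDist_comp_le [NormedSpace ℝ E] {F : Type*} [NormedAddCommGroup F]
    {L : ℝ≥0} {g : E → F} {B : Set E} {A : Set F} (hB : IsOpen B)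
    (hg : IntrinsicLipWith L g B) (hmaps : Set.MapsTo g B A)
    {x y : E} (hx : x ∈ B) (hy : y ∈ B) :
    intrinsicDist A (g x) (g y) ≤ L * intrinsicDist B x y := by
  have hgc : ContinuousOn g B := continuousOn_of_intrinsicLip hB hg
  by_cases hL : (L : ℝ≥0∞) = 0
  · have h0 : edist (g x) (g y) = 0 :=
      le_antisymm (by simpa [hL] using hg x hx y hy) zero_le
    have hxy : g x = g y := by rwa [edist_eq_zero] at h0
    rw [hxy]
    refine le_trans (intrinsicDist_le (fun _ => g y) continuousOn_const
      (fun t _ => hmaps hy) rfl rfl) ?_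
    have hconst : eVariationOn (fun _ : ℝ => g y) (Set.Icc 0 1) = 0 :=
      eVariationOn.constant_on (by rintro a ⟨_, _, rfl⟩ b ⟨_, _, rfl⟩; rfl)
    simp [pathLength, hconst]
  · conv_rhs => rw [intrinsicDist]
    simp only [ENNReal.mul_iInf_of_ne hL ENNReal.coe_ne_top]
    refine le_iInf fun γ => le_iInf fun hc => le_iInf fun hm => le_iInf fun h0 => le_iInf fun h1 => ?_
    refine le_trans (intrinsicDist_le (g ∘ γ) (hgc.comp hc fun t ht => hm ht)
      (fun t ht => hmaps (hm ht)) (by simp [h0]) (by simp [h1])) ?_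
    exact comp_pathLength_le hg hc hm

end Aux

theorem stmt8 {d m k : ℕ} (B : Set (EuclideanSpace ℝ (Fin d)))
    (A : Set (EuclideanSpace ℝ (Fin m)))
    (hB : B.Nonempty) (hA : A.Nonempty) (hBopen : IsOpen B) (hAopen : IsOpen A)
    (g : EuclideanSpace ℝ (Fin d) → EuclideanSpace ℝ (Fin m))
    (f : EuclideanSpace ℝ (Fin m) → EuclideanSpace ℝ (Fin k))
    (Lg Lf : ℝ≥0) (hmaps : Set.MapsTo g B A)
    (hg : IntrinsicLipWith Lg g B) (hf : IntrinsicLipWith Lf f A) :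
    IntrinsicLipWith (Lf * Lg) (f ∘ g) B := by
  intro x hx y hy
  calc edist ((f ∘ g) x) ((f ∘ g) y) ≤ Lf * intrinsicDist A (g x) (g y) :=
        hf _ (hmaps hx) _ (hmaps hy)
    _ ≤ Lf * (Lg * intrinsicDist B x y) :=
        mul_le_mul_right (intrinsicDist_comp_le hBopen hg hmaps hx hy) _
    _ = ↑(Lf * Lg) * intrinsicDist B x y := by rw [ENNReal.coe_mul, mul_assoc]
end

section
/- Let G : ℝ^d → ℝ^d be a C¹-diffeomorphism which is C² on ℝ^d \ Θ for a set Θ ⊆ ℝ^d with G(Θ) = Θ and G⁻¹(Θ) = Θ, and let σ : ℝ^d → ℝ^{d×d} be C¹ on ℝ^d \ Θ satisfying the commutativity condition σ_{j₁}'(x) σ_{j₂}(x) = σ_{j₂}'(x) σ_{j₁}(x) for all x ∈ ℝ^d \ Θ and all j₁, j₂ ∈ {1,…,d}. Define σ_G = (G'σ) ∘ G⁻¹. Then σ_G also satisfies the commutativity condition outside Θ: ((σ_G)_{j₁})'(x)(σ_G)_{j₂}(x) = ((σ_G)_{j₂})'(x)(σ_G)_{j₁}(x) for all x ∈ ℝ^d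 \ Θ. -/
theorem stmt13 {d : ℕ} (Θ : Set (EuclideanSpace ℝ (Fin d)))
    (G Ginv : EuclideanSpace ℝ (Fin d) → EuclideanSpace ℝ (Fin d))
    (hinv₁ : Function.LeftInverse Ginv G) (hinv₂ : Function.RightInverse Ginv G)
    (hG : ContDiff ℝ 1 G) (hGinv : ContDiff ℝ 1 Ginv)
    (hΘopen : IsOpen Θᶜ)
    (hG2 : ContDiffOn ℝ 2 G Θᶜ)
    (hGΘ : G '' Θ = Θ) (hGinvΘ : Ginv '' Θ = Θ)
    -- `σcol j` is the `j`-th column of the matrix-valued map `σ : ℝ^d → ℝ^{d×d}`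
    (σcol : Fin d → EuclideanSpace ℝ (Fin d) → EuclideanSpace ℝ (Fin d))
    (hσ : ∀ j, ContDiffOn ℝ 1 (σcol j) Θᶜ)
    (hcomm : ∀ j₁ j₂ : Fin d, ∀ x ∈ Θᶜ,
      fderiv ℝ (σcol j₁) x (σcol j₂ x) = fderiv ℝ (σcol j₂) x (σcol j₁ x)) :
    -- the transformed diffusion coefficient `σ_G = (G'σ) ∘ G⁻¹` (columnwise) also satisfies
    -- the commutativity condition outside Θ
    ∀ j₁ j₂ : Fin d, ∀ x ∈ Θᶜ,
      fderiv ℝ (fun z => fderiv ℝ G (Ginv z) (σcol j₁ (Ginv z))) x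
          (fderiv ℝ G (Ginv x) (σcol j₂ (Ginv x)))
        = fderiv ℝ (fun z => fderiv ℝ G (Ginv z) (σcol j₂ (Ginv z))) x
          (fderiv ℝ G (Ginv x) (σcol j₁ (Ginv x))) := by
  intro j₁ j₂ x hx
  set y := Ginv x with hy_def
  have hxy : G y = x := hinv₂ x
  have hy : y ∈ Θᶜ := by
    intro hmem
    exact hx (by rw [← hGΘ]; exact ⟨y, hmem, hxy⟩)
  have hGinv_diff : DifferentiableAt ℝ Ginv x :=
    (hGinv.differentiable one_ne_zero).differentiableAt
  have hG2y : ContDiffAt ℝ 2 G y := hG2.contDiffAt (hΘopen.mem_nhds hy)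
  have hfderivG : ContDiffAt ℝ 1 (fderiv ℝ G) y := hG2y.fderiv_right (by norm_num)
  have hfderivG_diff : DifferentiableAt ℝ (fderiv ℝ G) y :=
    hfderivG.differentiableAt one_ne_zero
  have hσat : ∀ j, DifferentiableAt ℝ (σcol j) y := fun j =>
    ((hσ j).contDiffAt (hΘopen.mem_nhds hy)).differentiableAt one_ne_zero
  have hHdiff : ∀ j, DifferentiableAt ℝ (fun z => fderiv ℝ G z (σcol j z)) y := fun j =>
    hfderivG_diff.clm_apply (hσat j)
  -- `fderiv Ginv x` is a left inverse of `fderiv G y`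
  have hinv_fd : ∀ v, fderiv ℝ Ginv x (fderiv ℝ G y v) = v := by
    intro v
    have hGd : DifferentiableAt ℝ G y := (hG.differentiable one_ne_zero).differentiableAt
    have hGinv_diff' : DifferentiableAt ℝ Ginv (G y) := by rw [hxy]; exact hGinv_diff
    have h1 : fderiv ℝ (Ginv ∘ G) y = (fderiv ℝ Ginv (G y)).comp (fderiv ℝ G y) :=
      fderiv_comp y hGinv_diff' hGd
    have h2 : fderiv ℝ (Ginv ∘ G) y
        = ContinuousLinearMap.id ℝ (EuclideanSpace ℝ (Fin d)) := by
      have : Ginv ∘ G = id := funext hinv₁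
      rw [this, fderiv_id]
    have h3 := h1.symm.trans h2
    have h4 := DFunLike.congr_fun h3 v
    simpa [hxy] using h4
  -- the outer derivative as a composition
  have hcomp : ∀ j, fderiv ℝ (fun z => fderiv ℝ G (Ginv z) (σcol j (Ginv z))) x
      = (fderiv ℝ (fun z => fderiv ℝ G z (σcol j z)) y).comp (fderiv ℝ Ginv x) := by
    intro j
    have := fderiv_comp x (hHdiff j) hGinv_diff
    simpa [Function.comp_def] using this
  -- compute the derivative of z ↦ G'(z) (σⱼ z)
  have hH : ∀ j v, fderiv ℝ (fun z => fderiv ℝ G z (σcol j z)) y v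
      = fderiv ℝ (fderiv ℝ G) y v (σcol j y)
        + fderiv ℝ G y (fderiv ℝ (σcol j) y v) := by
    intro j v
    rw [fderiv_clm_apply hfderivG_diff (hσat j)]
    simp only [ContinuousLinearMap.add_apply, ContinuousLinearMap.flip_apply,
      ContinuousLinearMap.comp_apply]
    abel
  have hsymm : IsSymmSndFDerivAt ℝ G y := hG2y.isSymmSndFDerivAt (by simp [minSmoothness_of_isRCLikeNormedField])
  rw [hcomp j₁, hcomp j₂]
  simp only [ContinuousLinearMap.comp_apply, hinv_fd, hH]
  rw [hsymm (σcol j₂ y) (σcol j₁ y), hcomm j₁ j₂ y hy]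
end

section
/- Let M ⊆ ℝ^d be a C¹-hypersurface of positive reach and x ∈ M. If u ∈ ℝ^d is orthogonal to the tangent space T_x(M) and ‖u‖ < reach(M), then x + u has a unique nearest point in M, and that nearest point is x, i.e. pr_M(x + u) = x and dist(x + u, M) = ‖u‖. -/
open scoped ENNReal NNReal

/-- `v` is a tangent vector to `M` at `x`: there is a `C¹` curve in `M` through `x`
with velocity `v`. -/
def IsTangentAt {d : ℕ} (M : Set (EuclideanSpace ℝ (Fin d)))
    (x v : EuclideanSpace ℝ (Fin d)) : Prop :=
  ∃ ε > (0:ℝ), ∃ γ : ℝ → EuclideanSpace ℝ (Fin d),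
    Set.MapsTo γ (Set.Ioo (-ε) ε) M ∧ ContDiffOn ℝ 1 γ (Set.Ioo (-ε) ε) ∧
    γ 0 = x ∧ HasDerivAt γ v 0

/-- `M` is a `C¹`-hypersurface: locally a regular level set of a `C¹` function. -/
def IsC1Hypersurface {d : ℕ} (M : Set (EuclideanSpace ℝ (Fin d))) : Prop :=
  M.Nonempty ∧ ∀ x ∈ M, ∃ U : Set (EuclideanSpace ℝ (Fin d)), IsOpen U ∧ x ∈ U ∧
    ∃ f : EuclideanSpace ℝ (Fin d) → ℝ, ContDiffOn ℝ 1 f U ∧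
      (∀ y ∈ U, fderivWithin ℝ f U y ≠ 0) ∧ M ∩ U = {y ∈ U | f y = 0}

/-- `x` has a unique nearest point in `M`. -/
def HasUniqueNearest {d : ℕ} (M : Set (EuclideanSpace ℝ (Fin d)))
    (x : EuclideanSpace ℝ (Fin d)) : Prop :=
  ∃! p, p ∈ M ∧ dist x p = Metric.infDist x M

/-- The reach of `M`: the supremum of all `ε` such that every point within distance `ε`
of `M` has a unique nearest point in `M`. -/
noncomputable def reach {d : ℕ} (M : Set (EuclideanSpace ℝ (Fin d))) : ℝ≥0∞ :=
  sSup {ε : ℝ≥0∞ | ∀ x, EMetric.infEdist x M < ε → HasUniqueNearest M x}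

/-- `ν` is a normal vector along `M`: continuous, unit length, and orthogonal to all
tangent vectors of `M`. -/
def IsNormalAlong {d : ℕ} (M : Set (EuclideanSpace ℝ (Fin d)))
    (ν : EuclideanSpace ℝ (Fin d) → EuclideanSpace ℝ (Fin d)) : Prop :=
  ContinuousOn ν M ∧ (∀ x ∈ M, ‖ν x‖ = 1) ∧
  ∀ x ∈ M, ∀ v, IsTangentAt M x v → (inner ℝ (ν x) v : ℝ) = 0


open Metric Filter Set Topology

section Aux
variable {d : ℕ} {M : Set (EuclideanSpace ℝ (Fin d))}

set_option maxHeartbeats 1000000 in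
lemma aux_push {ρ : ℝ} (hρ : ∀ y, Metric.infDist y M < ρ → HasUniqueNearest M y)
    (hMc : IsClosed M) {z p : EuclideanSpace ℝ (Fin d)} (hpM : p ∈ M)
    (hr : dist z p = Metric.infDist z M) (hr0 : 0 < Metric.infDist z M)
    {K s₀ : ℝ} (hK0 : 0 < K) (hK1 : K < 1) (hs₀ : 0 < s₀)
    (htube : Metric.infDist z M + s₀ < ρ) :
    ∃ s, 0 < s ∧ s ≤ s₀ ∧ Metric.infDist z M + K * s <
      Metric.infDist (z + s • ((Metric.infDist z M)⁻¹ • (z - p))) M := by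
  set r : ℝ := Metric.infDist z M with hrdef
  set w : EuclideanSpace ℝ (Fin d) := r⁻¹ • (z - p) with hwdef
  have hzp : ‖z - p‖ = r := by rw [← dist_eq_norm]; exact hr
  have hw : ‖w‖ = 1 := by
    rw [hwdef, norm_smul, hzp, Real.norm_eq_abs, abs_inv, abs_of_pos hr0,
      inv_mul_cancel₀ hr0.ne']
  by_contra hcon
  push_neg at hcon
  -- hcon : ∀ s, 0 < s → s ≤ s₀ → infDist (z + s • w) M ≤ r + K * s
  set s : ℕ → ℝ := fun n => s₀ / (n + 1) with hsdef
  have hspos : ∀ n, 0 < s n := fun n => div_pos hs₀ (by positivity)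
  have hsle : ∀ n, s n ≤ s₀ := by
    intro n
    rw [hsdef]
    calc s₀ / (n + 1) ≤ s₀ / 1 := by
          apply div_le_div_of_nonneg_left hs₀.le one_pos
          simp [Nat.cast_nonneg]
        _ = s₀ := by ring
  have hstend : Tendsto s atTop (𝓝 0) := by
    have h1 : Tendsto (fun n : ℕ => 1 / ((n : ℝ) + 1)) atTop (𝓝 0) :=
      tendsto_one_div_add_atTop_nhds_zero_nat
    have := h1.const_mul s₀
    simpa [hsdef, div_eq_mul_inv, mul_comm] using this
  set zs : ℕ → EuclideanSpace ℝ (Fin d) := fun n => z + s n • w with hzsdef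
  have hzs_tend : Tendsto zs atTop (𝓝 z) := by
    have : Tendsto (fun n => s n • w) atTop (𝓝 ((0:ℝ) • w)) := hstend.smul_const w
    rw [zero_smul] at this
    simpa [hzsdef] using (tendsto_const_nhds.add this)
  have hdistzzs : ∀ n, dist (zs n) z = s n := by
    intro n
    rw [hzsdef, dist_eq_norm]
    simp only [add_sub_cancel_left, norm_smul, hw, Real.norm_eq_abs, mul_one]
    exact abs_of_pos (hspos n)
  have hzs_tube : ∀ n, Metric.infDist (zs n) M ≤ r + K * s n := by
    intro n; exact hcon (s n) (hspos n) (hsle n)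
  have hzs_tube' : ∀ n, Metric.infDist (zs n) M < ρ := by
    intro n
    refine lt_of_le_of_lt (hzs_tube n) ?_
    have : K * s n ≤ s₀ := le_trans (by nlinarith [hspos n, hsle n]) (le_refl s₀)
    linarith
  -- choose nearest points
  have hnear : ∀ n, ∃ q, q ∈ M ∧ dist (zs n) q = Metric.infDist (zs n) M := by
    intro n
    obtain ⟨q, hq, -⟩ := hρ (zs n) (hzs_tube' n)
    exact ⟨q, hq⟩
  choose ps hpsM hpsd using hnear
  -- ps n bounded
  have hpsb : ∀ n, ps n ∈ closedBall z (r + 2 * s₀) := by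
    intro n
    rw [mem_closedBall, dist_comm]
    calc dist z (ps n) ≤ dist z (zs n) + dist (zs n) (ps n) := dist_triangle _ _ _
      _ ≤ s n + (r + K * s n) := by
          rw [dist_comm z (zs n)]
          exact add_le_add (le_of_eq (hdistzzs n)) ((hpsd n).le.trans (hzs_tube n))
      _ ≤ r + 2 * s₀ := by nlinarith [hspos n, hsle n, hK0, hK1]
  obtain ⟨q, hqcl, φ, hφ, hqt⟩ := tendsto_subseq_of_bounded isBounded_closedBall hpsb
  have hsφ : Tendsto (s ∘ φ) atTop (𝓝 0) := hstend.comp hφ.tendsto_atTop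
  have hqM : q ∈ M := hMc.mem_of_tendsto hqt (Eventually.of_forall fun n => hpsM (φ n))
  -- dist z q = r
  have hdzq : dist z q = r := by
    have hge : r ≤ dist z q := Metric.infDist_le_dist_of_mem hqM
    have hle : dist z q ≤ r := by
      have htend : Tendsto (fun n => dist z (ps (φ n))) atTop (𝓝 (dist z q)) :=
        (Continuous.dist continuous_const continuous_id).continuousAt.tendsto.comp hqt
      have hbd : ∀ n, dist z (ps (φ n)) ≤ r + (1 + K) * s (φ n) := by
        intro n
        calc dist z (ps (φ n)) ≤ dist z (zs (φ n)) + dist (zs (φ n)) (ps (φ n)) :=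
              dist_triangle _ _ _
          _ ≤ s (φ n) + (r + K * s (φ n)) := by
              rw [dist_comm z (zs (φ n))]
              exact add_le_add (le_of_eq (hdistzzs (φ n)))
                ((hpsd (φ n)).le.trans (hzs_tube (φ n)))
          _ = r + (1 + K) * s (φ n) := by ring
      have htend2 : Tendsto (fun n => r + (1 + K) * s (φ n)) atTop (𝓝 r) := by
        have := (hsφ.const_mul (1 + K)).const_add r
        simpa using this
      exact le_of_tendsto_of_tendsto' htend htend2 hbd
    linarith
  -- q = p by uniqueness at z
  have hq_eq : q = p := by
    have hzρ : Metric.infDist z M < ρ := by linarith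
    obtain ⟨p', -, hup⟩ := hρ z hzρ
    have h1 : q = p' := hup q ⟨hqM, hdzq⟩
    have h2 : p = p' := hup p ⟨hpM, hr⟩
    rw [h1, h2]
  -- per-n inner product inequality
  have hinner : ∀ n, -(r * K) ≤ inner ℝ (ps (φ n) - z) w := by
    intro n
    set m := φ n
    have h1 : dist (ps m) (zs m) ≤ r + K * s m := by
      rw [dist_comm]; exact (hpsd m).le.trans (hzs_tube m)
    have h2 : r ≤ dist (ps m) z := by
      rw [dist_comm]; exact Metric.infDist_le_dist_of_mem (hpsM m)
    have hexp : dist (ps m) (zs m) ^ 2 =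
        ‖ps m - z‖ ^ 2 - 2 * s m * inner ℝ (ps m - z) w + s m ^ 2 := by
      rw [dist_eq_norm]
      have : ps m - zs m = (ps m - z) - s m • w := by rw [hzsdef]; module
      rw [this, norm_sub_sq_real, norm_smul, real_inner_smul_right, hw]
      simp [Real.norm_eq_abs, abs_of_pos (hspos m)]
      ring
    have hnz : ‖ps m - z‖ = dist (ps m) z := (dist_eq_norm _ _).symm
    have hsq : dist (ps m) (zs m) ^ 2 ≤ (r + K * s m) ^ 2 := by
      have h0 : (0:ℝ) ≤ dist (ps m) (zs m) := dist_nonneg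
      nlinarith
    have hK2 : K ^ 2 < 1 := by nlinarith
    have h2sq : r * r ≤ dist (ps m) z * dist (ps m) z :=
      mul_self_le_mul_self hr0.le h2
    have key : s m ^ 2 * (1 - K ^ 2) - 2 * r * K * s m ≤
        2 * s m * inner ℝ (ps m - z) w := by nlinarith [hexp, hsq, h2sq]
    have h3 : 0 ≤ 2 * s m * ((inner ℝ (ps m - z) w : ℝ) + r * K) := by
      have h5 : 0 ≤ s m ^ 2 * (1 - K ^ 2) :=
        mul_nonneg (sq_nonneg _) (by nlinarith)
      nlinarith [key, h5]
    nlinarith [h3, hspos m]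
  -- limit inequality
  have hlim : Tendsto (fun n => (inner ℝ (ps (φ n) - z) w : ℝ)) atTop (𝓝 (inner ℝ (q - z) w)) := by
    exact Tendsto.inner ((hqt.sub tendsto_const_nhds)) tendsto_const_nhds
  have hfin : -(r * K) ≤ (inner ℝ (q - z) w : ℝ) :=
    le_of_tendsto_of_tendsto' tendsto_const_nhds hlim hinner
  -- but inner ℝ (p - z) w = -r
  have : (inner ℝ (q - z) w : ℝ) = -r := by
    rw [hq_eq, hwdef]
    have : p - z = -(z - p) := by abel
    rw [this, real_inner_smul_right, inner_neg_left, real_inner_self_eq_norm_sq, hzp]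
    field_simp
  rw [this] at hfin
  nlinarith

set_option maxHeartbeats 1000000 in
lemma aux_grow {ρ : ℝ} (hρ : ∀ y, Metric.infDist y M < ρ → HasUniqueNearest M y)
    (hMc : IsClosed M) {y : EuclideanSpace ℝ (Fin d)} {c L K : ℝ}
    (hc : Metric.infDist y M = c) (hc0 : 0 < c) (hL : 0 < L) (hcL : c + L < ρ)
    (hK0 : 0 < K) (hK1 : K < 1) :
    ∃ z, dist z y ≤ L ∧ c + K * L ≤ Metric.infDist z M := by
  set φf : EuclideanSpace ℝ (Fin d) → ℝ := fun z => Metric.infDist z M - K * dist z y with hφf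
  have hcont : ContinuousOn φf (closedBall y L) := by
    apply Continuous.continuousOn
    exact (continuous_infDist_pt M).sub (continuous_const.mul (continuous_id.dist continuous_const))
  obtain ⟨zs, hzsball, hmax⟩ := (isCompact_closedBall y L).exists_isMaxOn
    ⟨y, mem_closedBall_self hL.le⟩ hcont
  have hφy : φf y = c := by simp [hφf, hc]
  have hφzs : c ≤ φf zs := hφy ▸ hmax (mem_closedBall_self hL.le)
  have hdzs : Metric.infDist zs M ≥ c + K * dist zs y := by
    have : φf zs = Metric.infDist zs M - K * dist zs y := rfl
    linarith [hφzs]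
  have hzsy : dist zs y ≤ L := mem_closedBall.mp hzsball
  -- claim dist zs y = L
  by_cases hlt : dist zs y = L
  · exact ⟨zs, hzsy, by rw [hlt] at hdzs; linarith⟩
  exfalso
  have hltL : dist zs y < L := lt_of_le_of_ne hzsy hlt
  have hdzs0 : 0 < Metric.infDist zs M := by
    have : 0 ≤ K * dist zs y := mul_nonneg hK0.le dist_nonneg
    linarith
  have hdzsle : Metric.infDist zs M ≤ c + dist zs y := by
    have := Metric.infDist_le_infDist_add_dist (x := zs) (y := y) (s := M)
    rw [hc] at this; linarith
  set s₀ : ℝ := L - dist zs y with hs₀def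
  have hs₀ : 0 < s₀ := by simp [hs₀def]; linarith
  have htube : Metric.infDist zs M + s₀ < ρ := by
    rw [hs₀def]; linarith
  have hzsρ : Metric.infDist zs M < ρ := by linarith
  obtain ⟨p, ⟨hpM, hpd⟩, -⟩ := hρ zs hzsρ
  obtain ⟨s, hs0, hss₀, hpush⟩ := aux_push hρ hMc hpM hpd hdzs0 hK0 hK1 hs₀ htube
  set z' := zs + s • ((Metric.infDist zs M)⁻¹ • (zs - p)) with hz'def
  have hz'ball : z' ∈ closedBall y L := by
    rw [mem_closedBall]
    have hnorm : ‖z' - zs‖ = s := by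
      rw [hz'def]
      simp only [add_sub_cancel_left]
      rw [norm_smul, norm_smul, Real.norm_eq_abs, Real.norm_eq_abs, ← dist_eq_norm]
      rw [hpd]
      rw [abs_of_pos hs0, abs_of_nonneg (inv_nonneg.mpr (le_of_lt hdzs0))]
      field_simp
    calc dist z' y ≤ dist z' zs + dist zs y := dist_triangle _ _ _
      _ ≤ s + dist zs y := by rw [dist_eq_norm]; rw [hnorm]
      _ ≤ L := by rw [hs₀def] at hss₀; linarith
  have hφz' : φf z' ≤ φf zs := hmax hz'ball
  have : φf zs < φf z' := by
    have h1 : Metric.infDist zs M + K * s < Metric.infDist z' M := hpush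
    have h2 : dist z' y ≤ dist zs y + s := by
      have hnorm : dist z' zs ≤ s := by
        rw [hz'def, dist_eq_norm]
        simp only [add_sub_cancel_left]
        rw [norm_smul, norm_smul, Real.norm_eq_abs, Real.norm_eq_abs, ← dist_eq_norm, hpd]
        rw [abs_of_pos hs0, abs_of_nonneg (inv_nonneg.mpr (le_of_lt hdzs0))]
        field_simp
        exact le_rfl
      calc dist z' y ≤ dist z' zs + dist zs y := dist_triangle _ _ _
        _ ≤ s + dist zs y := by linarith
        _ = dist zs y + s := by ring
    have : φf z' = Metric.infDist z' M - K * dist z' y := rfl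
    have h3 : K * dist z' y ≤ K * (dist zs y + s) :=
      mul_le_mul_of_nonneg_left h2 hK0.le
    simp only [hφf]
    nlinarith
  linarith

set_option maxHeartbeats 1000000 in
lemma aux_ray {ρ : ℝ} (hne : M.Nonempty)
    (hρ : ∀ y, Metric.infDist y M < ρ → HasUniqueNearest M y)
    (hMc : IsClosed M) {p y : EuclideanSpace ℝ (Fin d)} (hpM : p ∈ M)
    (hyd : Metric.infDist y M = dist y p) (h0 : 0 < dist y p)
    {T : ℝ} (hT1 : dist y p ≤ T) (hT2 : T < ρ) :
    Metric.infDist (p + (T / dist y p) • (y - p)) M = T := by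
  set c : ℝ := dist y p with hcdef
  rcases eq_or_lt_of_le hT1 with heq | hTc
  · have : (T / c) = 1 := by rw [← heq]; field_simp
    rw [this, one_smul]
    have : p + (y - p) = y := by abel
    rw [this, hyd, heq]
  · set L : ℝ := T - c with hLdef
    have hL : 0 < L := by simp [hLdef]; linarith
    have hcL : c + L < ρ := by rw [hLdef]; linarith
    -- for each m, apply aux_grow with K_m = 1 - 1/(m+2)
    have hAK : ∀ m : ℕ, ∃ z, dist z y ≤ L ∧
        c + (1 - ((m:ℝ)+2)⁻¹) * L ≤ Metric.infDist z M := by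
      intro m
      have hm2 : (0:ℝ) < (m:ℝ) + 2 := by positivity
      have hminv : ((m:ℝ)+2)⁻¹ ≤ 2⁻¹ := by
        apply inv_anti₀ (by norm_num)
        have : (0:ℝ) ≤ (m:ℝ) := Nat.cast_nonneg m
        linarith
      have h1 : (0:ℝ) < 1 - ((m:ℝ)+2)⁻¹ := by
        have : (0:ℝ) < ((m:ℝ)+2)⁻¹ := by positivity
        linarith [hminv]
      have h2 : 1 - ((m:ℝ)+2)⁻¹ < 1 := by
        have : (0:ℝ) < ((m:ℝ)+2)⁻¹ := by positivity
        linarith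
      exact aux_grow hρ hMc hyd h0 hL hcL h1 h2
    choose zs hzsball hzsd using hAK
    have hzsball' : ∀ m, zs m ∈ closedBall y L := fun m => mem_closedBall.mpr (hzsball m)
    obtain ⟨z, hzcl, φ, hφ, hzt⟩ := tendsto_subseq_of_bounded isBounded_closedBall hzsball'
    have hzball : dist z y ≤ L := by
      have : z ∈ closedBall y L := by
        rwa [IsClosed.closure_eq isClosed_closedBall] at hzcl
      exact mem_closedBall.mp this
    -- infDist z M = c + L
    have hKlim : Tendsto (fun m : ℕ => c + (1 - ((φ m : ℝ)+2)⁻¹) * L) atTop (𝓝 (c + L)) := by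
      have h1 : Tendsto (fun m : ℕ => (1 - ((m:ℝ)+2)⁻¹)) atTop (𝓝 1) := by
        have h2 : Tendsto (fun m : ℕ => ((m:ℝ)+2)) atTop atTop :=
          tendsto_atTop_add_const_right atTop 2 tendsto_natCast_atTop_atTop
        have h3 := h2.inv_tendsto_atTop
        simpa using (tendsto_const_nhds.sub h3)
      have h3 : Tendsto (fun m : ℕ => (1 - ((φ m : ℝ)+2)⁻¹)) atTop (𝓝 1) :=
        h1.comp hφ.tendsto_atTop
      have := (h3.mul_const L).const_add c
      simpa using this
    have hdz : Metric.infDist z M = c + L := by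
      have htd : Tendsto (fun m => Metric.infDist (zs (φ m)) M) atTop (𝓝 (Metric.infDist z M)) :=
        ((continuous_infDist_pt M).continuousAt.tendsto).comp hzt
      have hge : c + L ≤ Metric.infDist z M :=
        le_of_tendsto_of_tendsto' hKlim htd (fun m => hzsd (φ m))
      have hle : Metric.infDist z M ≤ c + L := by
        have h1 : Metric.infDist z M ≤ dist z p := Metric.infDist_le_dist_of_mem hpM
        have h2 : dist z p ≤ dist z y + dist y p := dist_triangle _ _ _
        rw [← hcdef] at h2; linarith
      linarith
    -- equalities
    have hdzp : dist z p = c + L := by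
      have h1 : c + L ≤ dist z p := hdz ▸ Metric.infDist_le_dist_of_mem hpM
      have h2 : dist z p ≤ dist z y + c := by
        have := dist_triangle z y p; rw [← hcdef] at this; linarith
      linarith
    have hdzy : dist z y = L := by
      have h2 : dist z p ≤ dist z y + c := by
        have := dist_triangle z y p; rw [← hcdef] at this; linarith
      linarith [hdzp, hzball]
    -- collinearity
    have hinner : (inner ℝ (z - y) (y - p) : ℝ) = L * c := by
      have hnormsum : ‖(z - y) + (y - p)‖ = L + c := by
        have : (z - y) + (y - p) = z - p := by abel
        rw [this, ← dist_eq_norm, hdzp]; ring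
      have h1 : ‖z - y‖ = L := by rw [← dist_eq_norm]; exact hdzy
      have h2 : ‖y - p‖ = c := by rw [← dist_eq_norm]
      have hsq := norm_add_sq_real (z - y) (y - p)
      rw [hnormsum, h1, h2] at hsq
      nlinarith
    have hcoll : c • (z - y) = L • (y - p) := by
      have h1 : ‖z - y‖ = L := by rw [← dist_eq_norm]; exact hdzy
      have h2 : ‖y - p‖ = c := by rw [← dist_eq_norm]
      have := inner_eq_norm_mul_iff_real (x := z - y) (y := y - p)
      rw [h1, h2] at this
      exact this.mp (by rw [hinner])
    -- conclude
    have hzeq : p + (T / c) • (y - p) = z := by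
      have hc0' : c ≠ 0 := h0.ne'
      have hTc' : T / c = 1 + L / c := by rw [hLdef]; field_simp; ring
      rw [hTc', add_smul, one_smul]
      have : (L / c) • (y - p) = c⁻¹ • (L • (y - p)) := by
        rw [smul_smul]; congr 1; field_simp
      rw [this, ← hcoll, smul_smul, inv_mul_cancel₀ hc0', one_smul]
      abel
    rw [hzeq, hdz, hLdef]; ring

set_option maxHeartbeats 1000000 in
lemma aux_curve {x : EuclideanSpace ℝ (Fin d)} {U : Set (EuclideanSpace ℝ (Fin d))}
    (hU : IsOpen U) (hxU : x ∈ U) {f : EuclideanSpace ℝ (Fin d) → ℝ}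
    (hf : ContDiffOn ℝ 1 f U) (hMU : M ∩ U = {y ∈ U | f y = 0}) (hxM : x ∈ M)
    {θ : EuclideanSpace ℝ (Fin d)} (hθ : fderiv ℝ f x θ = 0)
    (hDf : fderiv ℝ f x ≠ 0) : IsTangentAt M x θ := by
  classical
  have hfat : ContDiffAt ℝ 1 f x := hf.contDiffAt (hU.mem_nhds hxU)
  have hd : DifferentiableAt ℝ f x := hfat.differentiableAt one_ne_zero
  set Df := fderiv ℝ f x with hDfdef
  have hfx0 : f x = 0 := by
    have : x ∈ M ∩ U := ⟨hxM, hxU⟩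
    rw [hMU] at this
    exact this.2
  -- pick b with Df b = 1
  obtain ⟨b₀, hb₀⟩ : ∃ b₀, Df b₀ ≠ 0 := by
    by_contra hcon
    push_neg at hcon
    exact hDf (ContinuousLinearMap.ext fun v => by simp [hcon v])
  set b : EuclideanSpace ℝ (Fin d) := (Df b₀)⁻¹ • b₀ with hbdef
  have hDfb : Df b = 1 := by
    rw [hbdef, map_smul]
    exact inv_mul_cancel₀ hb₀
  -- the auxiliary map F
  have hθ' : Df θ = 0 := hθ
  set LA : (ℝ × ℝ) →L[ℝ] EuclideanSpace ℝ (Fin d) :=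
    ((ContinuousLinearMap.fst ℝ ℝ ℝ).smulRight θ) +
    ((ContinuousLinearMap.snd ℝ ℝ ℝ).smulRight b) with hLAdef
  have hLA : ∀ p : ℝ × ℝ, LA p = p.1 • θ + p.2 • b := by
    intro p; simp [hLAdef]
  set A : ℝ × ℝ → EuclideanSpace ℝ (Fin d) := fun p => x + LA p with hAdef
  have hA0 : A (0, 0) = x := by simp [hAdef, hLA]
  have hA' : HasFDerivAt A LA (0, 0) := LA.hasFDerivAt.const_add x
  have hAc : ContDiff ℝ 1 A := contDiff_const.add LA.contDiff
  set F : ℝ × ℝ → ℝ × ℝ := fun p => (p.1, f (A p)) with hFdef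
  have hF00 : F (0, 0) = (0, 0) := by
    have : f (A (0, 0)) = 0 := by rw [hA0, hfx0]
    simp only [hFdef]
    rw [this]
  have hFat : ContDiffAt ℝ 1 F (0, 0) := by
    apply ContDiffAt.prodMk contDiffAt_fst
    exact ContDiffAt.comp (0, 0) (hA0.symm ▸ hfat) hAc.contDiffAt
  have hfA' : HasFDerivAt (fun p => f (A p)) (Df.comp LA) (0, 0) :=
    HasFDerivAt.comp (0, 0) (hA0.symm ▸ hd.hasFDerivAt) hA'
  have hFps : HasFDerivAt F ((ContinuousLinearMap.fst ℝ ℝ ℝ).prod (Df.comp LA)) (0, 0) :=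
    hasFDerivAt_fst.prodMk hfA'
  have heq : (ContinuousLinearMap.fst ℝ ℝ ℝ).prod (Df.comp LA) =
      (ContinuousLinearEquiv.refl ℝ (ℝ × ℝ) : (ℝ × ℝ) →L[ℝ] (ℝ × ℝ)) := by
    apply ContinuousLinearMap.ext
    intro v
    have h1 : Df (LA v) = v.2 := by
      rw [hLA, map_add, map_smul, map_smul, hθ', hDfb, smul_eq_mul, smul_eq_mul]
      ring
    apply Prod.ext <;> simp [h1]
  rw [heq] at hFps
  have hstrict : HasStrictFDerivAt F
      ((ContinuousLinearEquiv.refl ℝ (ℝ × ℝ) : (ℝ × ℝ) →L[ℝ] (ℝ × ℝ))) (0, 0) :=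
    hFat.hasStrictFDerivAt' hFps one_ne_zero
  set G := hFat.localInverse hFps one_ne_zero with hGdef
  have hGcd : ContDiffAt ℝ 1 G (0, 0) := by
    have := hFat.to_localInverse (f' := ContinuousLinearEquiv.refl ℝ (ℝ × ℝ)) hFps one_ne_zero
    rwa [hF00] at this
  have hright : ∀ᶠ yy in 𝓝 ((0:ℝ), (0:ℝ)), F (G yy) = yy := by
    have := hstrict.eventually_right_inverse
    rwa [hF00] at this
  have hG00 : G (0, 0) = (0, 0) := by
    have := hstrict.localInverse_apply_image
    rwa [hF00] at this
  -- the curve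
  set γ : ℝ → EuclideanSpace ℝ (Fin d) := fun s => A (G (s, 0)) with hγdef
  have hγ0 : γ 0 = x := by
    show A (G (0, 0)) = x
    rw [hG00, hA0]
  have hγcd : ContDiffAt ℝ 1 γ 0 := by
    have hι : ContDiffAt ℝ 1 (fun s : ℝ => ((s, 0) : ℝ × ℝ)) 0 :=
      (contDiff_id.prodMk contDiff_const).contDiffAt
    have hGι : ContDiffAt ℝ 1 (fun s : ℝ => G (s, 0)) 0 :=
      ContDiffAt.comp 0 hGcd hι
    exact ContDiffAt.comp (g := A) (f := fun s : ℝ => G (s, 0)) 0 hAc.contDiffAt hGι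
  obtain ⟨v, hv, hγv⟩ := hγcd.contDiffOn le_rfl (by norm_num)
  -- derivative
  have hDeriv : HasDerivAt γ θ 0 := by
    have hG' : HasFDerivAt G
        ((ContinuousLinearMap.id ℝ (ℝ × ℝ))) (0, 0) := by
      have := (hstrict.to_localInverse).hasFDerivAt
      rw [hF00] at this
      simp at this
      exact this
    have hι' : HasFDerivAt (fun s : ℝ => ((s, 0) : ℝ × ℝ))
        (ContinuousLinearMap.inl ℝ ℝ ℝ) 0 := (ContinuousLinearMap.inl ℝ ℝ ℝ).hasFDerivAt
    have hcompose : HasFDerivAt (fun s : ℝ => G (s, 0))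
        ((ContinuousLinearMap.id ℝ (ℝ × ℝ)).comp (ContinuousLinearMap.inl ℝ ℝ ℝ)) 0 :=
      HasFDerivAt.comp 0 hG' hι'
    have hAγ : HasFDerivAt A LA (G ((0:ℝ), (0:ℝ))) := by rw [hG00]; exact hA'
    have hγ' : HasFDerivAt γ
        (LA.comp ((ContinuousLinearMap.id ℝ (ℝ × ℝ)).comp (ContinuousLinearMap.inl ℝ ℝ ℝ))) 0 :=
      HasFDerivAt.comp (g := A) (f := fun s : ℝ => G (s, 0)) 0 hAγ hcompose
    have := hγ'.hasDerivAt
    simpa [hLA] using this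
  -- eventual membership
  have hP1 : ∀ᶠ s : ℝ in 𝓝 0, F (G (s, 0)) = (s, 0) := by
    have htend : Tendsto (fun s : ℝ => ((s, 0) : ℝ × ℝ)) (𝓝 0) (𝓝 (0, 0)) := by
      have : Continuous (fun s : ℝ => ((s, 0) : ℝ × ℝ)) := continuous_id.prodMk continuous_const
      simpa using this.tendsto 0
    exact htend.eventually hright
  have hP2 : ∀ᶠ s : ℝ in 𝓝 0, γ s ∈ U := by
    have : ContinuousAt γ 0 := hγcd.continuousAt
    have hU' : U ∈ 𝓝 (γ 0) := by rw [hγ0]; exact hU.mem_nhds hxU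
    exact this.tendsto.eventually_mem hU'
  have hP3 : ∀ᶠ s : ℝ in 𝓝 0, s ∈ v := hv
  have hall := (hP1.and hP2).and hP3
  rw [Metric.eventually_nhds_iff] at hall
  obtain ⟨ε, hε, hball⟩ := hall
  refine ⟨ε, hε, γ, ?_, ?_, hγ0, hDeriv⟩
  · intro s hs
    have hsd : dist s 0 < ε := by
      rw [Real.dist_eq, sub_zero]
      exact abs_lt.mpr ⟨hs.1, hs.2⟩
    obtain ⟨⟨h1, h2⟩, -⟩ := hball hsd
    have hfγ : f (γ s) = 0 := by
      have := congrArg Prod.snd h1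
      simpa [hFdef] using this
    have : γ s ∈ M ∩ U := by
      rw [hMU]
      exact ⟨h2, hfγ⟩
    exact this.1
  · apply hγv.mono
    intro s hs
    have hsd : dist s 0 < ε := by
      rw [Real.dist_eq, sub_zero]
      exact abs_lt.mpr ⟨hs.1, hs.2⟩
    exact (hball hsd).2

set_option maxHeartbeats 1000000 in
lemma aux_dir (hM : IsC1Hypersurface M) {x : EuclideanSpace ℝ (Fin d)} (hx : x ∈ M)
    {u : EuclideanSpace ℝ (Fin d)}
    (hperp : ∀ v, IsTangentAt M x v → (inner ℝ u v : ℝ) = 0)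
    {p : ℕ → EuclideanSpace ℝ (Fin d)} (hpM : ∀ n, p n ∈ M) (hpx : ∀ n, p n ≠ x)
    (hpt : Tendsto p atTop (𝓝 x)) {θ : EuclideanSpace ℝ (Fin d)}
    (hθt : Tendsto (fun n => (‖p n - x‖)⁻¹ • (p n - x)) atTop (𝓝 θ)) :
    (inner ℝ u θ : ℝ) = 0 := by
  obtain ⟨-, hloc⟩ := hM
  obtain ⟨U, hU, hxU, f, hf, hdf, hMU⟩ := hloc x hx
  have hfat : ContDiffAt ℝ 1 f x := hf.contDiffAt (hU.mem_nhds hxU)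
  have hd : DifferentiableAt ℝ f x := hfat.differentiableAt one_ne_zero
  set Df := fderiv ℝ f x with hDfdef
  have hDfne : Df ≠ 0 := by
    have := hdf x hxU
    rwa [fderivWithin_of_isOpen hU hxU] at this
  have hfx0 : f x = 0 := by
    have : x ∈ M ∩ U := ⟨hx, hxU⟩
    rw [hMU] at this
    exact this.2
  -- little-o argument
  have hlittle : (fun y => f y - f x - Df (y - x)) =o[𝓝 x] fun y => y - x :=
    hd.hasFDerivAt.isLittleO
  have hseq : (fun n => f (p n) - f x - Df (p n - x)) =o[atTop] fun n => p n - x :=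
    hlittle.comp_tendsto hpt
  have hUev : ∀ᶠ n in atTop, f (p n) = 0 := by
    have h1 : ∀ᶠ n in atTop, p n ∈ U := hpt.eventually_mem (hU.mem_nhds hxU)
    filter_upwards [h1] with n hn
    have : p n ∈ M ∩ U := ⟨hpM n, hn⟩
    rw [hMU] at this
    exact this.2
  have hDfo : (fun n => Df (p n - x)) =o[atTop] fun n => p n - x := by
    have hcongr : (fun n => f (p n) - f x - Df (p n - x)) =ᶠ[atTop]
        (fun n => -Df (p n - x)) := by
      filter_upwards [hUev] with n hn
      rw [hn, hfx0]; ring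
    have := hseq.congr' hcongr EventuallyEq.rfl
    simpa using this.neg_left
  have hDfo' : (fun n => Df (p n - x)) =o[atTop] fun n => ‖p n - x‖ :=
    (Asymptotics.isLittleO_norm_right).mpr hDfo
  have htd : Tendsto (fun n => Df (p n - x) / ‖p n - x‖) atTop (𝓝 0) := by
    refine (Asymptotics.isLittleO_iff_tendsto ?_).mp hDfo'
    intro n hn
    have : p n - x = 0 := by rwa [norm_eq_zero] at hn
    rw [this, map_zero]
  have htd2 : Tendsto (fun n => Df ((‖p n - x‖)⁻¹ • (p n - x))) atTop (𝓝 0) := by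
    refine htd.congr fun n => ?_
    rw [map_smul, smul_eq_mul, div_eq_inv_mul]
  have htd3 : Tendsto (fun n => Df ((‖p n - x‖)⁻¹ • (p n - x))) atTop (𝓝 (Df θ)) :=
    (Df.continuous.continuousAt.tendsto).comp hθt
  have hDfθ : Df θ = 0 := tendsto_nhds_unique htd3 htd2
  exact hperp θ (aux_curve hU hxU hf hMU hx hDfθ hDfne)

end Aux

set_option maxHeartbeats 2000000 in
theorem stmt15 {d : ℕ} (M : Set (EuclideanSpace ℝ (Fin d)))
    (hM : IsC1Hypersurface M) (hreach : 0 < reach M)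
    (x : EuclideanSpace ℝ (Fin d)) (hx : x ∈ M) (u : EuclideanSpace ℝ (Fin d))
    (hperp : ∀ v, IsTangentAt M x v → (inner ℝ u v : ℝ) = 0)
    (hu : (‖u‖₊ : ℝ≥0∞) < reach M) :
    HasUniqueNearest M (x + u) ∧ Metric.infDist (x + u) M = ‖u‖ ∧
    ∀ y ∈ M, dist (x + u) y = Metric.infDist (x + u) M → y = x := by
  classical
  have hne : M.Nonempty := hM.1
  -- extract a real tube radius ρ
  obtain ⟨ε, hεmem, hεu⟩ := lt_sSup_iff.mp hu
  set ρe : ℝ≥0∞ := min ε (‖u‖₊ + 1) with hρedef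
  have hρe_top : ρe ≠ ⊤ := by
    have : ρe ≤ ‖u‖₊ + 1 := min_le_right _ _
    exact ne_top_of_le_ne_top (by simp) this
  set ρ : ℝ := ρe.toReal with hρdef
  have hρugt : (‖u‖₊ : ℝ≥0∞) < ρe := lt_min hεu (ENNReal.lt_add_right ENNReal.coe_ne_top one_ne_zero)
  have hρu : ‖u‖ < ρ := by
    have := (ENNReal.toReal_lt_toReal ENNReal.coe_ne_top hρe_top).mpr hρugt
    simpa using this
  have hρpos : 0 < ρ := lt_of_le_of_lt (norm_nonneg u) hρu
  have hρ : ∀ y, Metric.infDist y M < ρ → HasUniqueNearest M y := by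
    intro y hy
    have h1 : EMetric.infEdist y M ≠ ⊤ := Metric.infEdist_ne_top hne
    have h2 : EMetric.infEdist y M < ρe := by
      rw [← ENNReal.toReal_lt_toReal h1 hρe_top]
      exact hy
    exact hεmem y (lt_of_lt_of_le h2 (min_le_left _ _))
  -- M is closed
  have hMc : IsClosed M := by
    apply isClosed_of_closure_subset
    intro y hy
    have h0 : Metric.infDist y M = 0 := by
      rw [← Metric.infDist_closure]
      exact Metric.infDist_zero_of_mem hy
    obtain ⟨p, ⟨hpM, hpd⟩, -⟩ := hρ y (by rw [h0]; exact hρpos)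
    have : dist y p = 0 := by rw [hpd, h0]
    rw [dist_eq_zero] at this
    rw [this]; exact hpM
  -- main claim
  have hdxu : dist (x + u) x = ‖u‖ := by
    rw [dist_eq_norm]; simp
  have hstar : Metric.infDist (x + u) M = ‖u‖ := by
    rcases eq_or_ne u 0 with hu0 | hu0
    · rw [hu0]
      simp [Metric.infDist_zero_of_mem hx]
    · set R : ℝ := ‖u‖ with hRdef
      have hR : 0 < R := norm_pos_iff.mpr hu0
      set uu : EuclideanSpace ℝ (Fin d) := R⁻¹ • u with huudef
      have huu : ‖uu‖ = 1 := by
        rw [huudef, norm_smul, Real.norm_eq_abs, abs_of_pos (inv_pos.mpr hR)]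
        field_simp
        rfl
      have hRu : R • uu = u := by
        rw [huudef, smul_smul, mul_inv_cancel₀ hR.ne', one_smul]
      have hxtu : ∀ t : ℝ, 0 ≤ t → dist (x + t • uu) x = t := by
        intro t ht
        rw [dist_eq_norm, add_sub_cancel_left, norm_smul, huu, Real.norm_eq_abs,
          abs_of_nonneg ht, mul_one]
      by_cases hcase : ∃ t, 0 < t ∧ t ≤ R ∧ Metric.infDist (x + t • uu) M = t
      · obtain ⟨t, ht0, htR, htd⟩ := hcase
        have hdyx : dist (x + t • uu) x = t := hxtu t ht0.le
        have happ := aux_ray (p := x) (y := x + t • uu) (T := R) hne hρ hMc hx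
          (by rw [hdyx, htd]) (by rw [hdyx]; exact ht0) (by rw [hdyx]; exact htR) hρu
        have hexp : x + (R / dist (x + t • uu) x) • ((x + t • uu) - x) = x + u := by
          rw [hdyx, add_sub_cancel_left, smul_smul, div_mul_cancel₀ _ ht0.ne', hRu]
        rw [hexp] at happ
        exact happ
      · push_neg at hcase
        set t : ℕ → ℝ := fun n => R / (n + 1) with htdef
        have ht0 : ∀ n, 0 < t n := fun n => div_pos hR (by positivity)
        have htR : ∀ n, t n ≤ R := by
          intro n
          rw [htdef]
          calc R / ((n:ℝ) + 1) ≤ R / 1 := by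
                apply div_le_div_of_nonneg_left hR.le one_pos
                simp [Nat.cast_nonneg]
            _ = R := by ring
        have httend : Tendsto t atTop (𝓝 0) := by
          have h1 : Tendsto (fun n : ℕ => 1 / ((n : ℝ) + 1)) atTop (𝓝 0) :=
            tendsto_one_div_add_atTop_nhds_zero_nat
          have := h1.const_mul R
          simpa [htdef, div_eq_mul_inv, mul_comm] using this
        set q : ℕ → EuclideanSpace ℝ (Fin d) := fun n => x + t n • uu with hqdef
        have hdq : ∀ n, dist (q n) x = t n := fun n => hxtu (t n) (ht0 n).le
        have hqinf_le : ∀ n, Metric.infDist (q n) M ≤ t n := by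
          intro n
          have := Metric.infDist_le_dist_of_mem (x := q n) hx
          rwa [hdq n] at this
        have hq_tube : ∀ n, Metric.infDist (q n) M < ρ := fun n =>
          lt_of_le_of_lt (hqinf_le n) (lt_of_le_of_lt (htR n) hρu)
        have hnear : ∀ n, ∃ pp, pp ∈ M ∧ dist (q n) pp = Metric.infDist (q n) M := by
          intro n
          obtain ⟨pp, hpp, -⟩ := hρ (q n) (hq_tube n)
          exact ⟨pp, hpp⟩
        choose ps hpsM hpsd using hnear
        have hlt : ∀ n, Metric.infDist (q n) M < t n := by
          intro n
          exact lt_of_le_of_ne (hqinf_le n) (hcase (t n) (ht0 n) (htR n))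
        have hpsne : ∀ n, ps n ≠ x := by
          intro n h
          have := hpsd n
          rw [h, hdq n] at this
          exact absurd this.symm (ne_of_lt (hlt n))
        set e : ℕ → EuclideanSpace ℝ (Fin d) := fun n => ps n - x with hedef
        have hene : ∀ n, e n ≠ 0 := fun n => sub_ne_zero.mpr (hpsne n)
        have henorm : ∀ n, 0 < ‖e n‖ := fun n => norm_pos_iff.mpr (hene n)
        have hebound : ∀ n, ‖e n‖ ≤ 2 * t n := by
          intro n
          have h1 : dist (ps n) x ≤ dist (ps n) (q n) + dist (q n) x := dist_triangle _ _ _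
          rw [hdq n, dist_comm (ps n) (q n), hpsd n] at h1
          have h2 : dist (ps n) x = ‖e n‖ := by rw [hedef, dist_eq_norm]
          rw [h2] at h1
          linarith [hqinf_le n]
        -- inequality (A): ‖e n‖² ≤ 2 t n ⟪uu, e n⟫
        have hA : ∀ n, ‖e n‖ ^ 2 ≤ 2 * t n * (inner ℝ uu (e n) : ℝ) := by
          intro n
          have hfle : dist (q n) (ps n) ≤ t n := by rw [hpsd n]; exact hqinf_le n
          have hqe : q n - ps n = t n • uu - e n := by
            rw [hqdef, hedef]; module
          have hexp : dist (q n) (ps n) ^ 2 =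
              t n ^ 2 - 2 * t n * (inner ℝ uu (e n) : ℝ) + ‖e n‖ ^ 2 := by
            rw [dist_eq_norm, hqe, norm_sub_sq_real, norm_smul, huu, Real.norm_eq_abs,
              abs_of_pos (ht0 n), real_inner_smul_left]
            ring
          nlinarith [hfle, dist_nonneg (x := q n) (y := ps n), ht0 n]
        -- normalized directions
        set θs : ℕ → EuclideanSpace ℝ (Fin d) := fun n => (‖e n‖)⁻¹ • e n with hθsdef
        have hθs1 : ∀ n, ‖θs n‖ = 1 := by
          intro n
          rw [hθsdef, norm_smul, Real.norm_eq_abs, abs_of_pos (inv_pos.mpr (henorm n)),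
            inv_mul_cancel₀ (henorm n).ne']
        have hθsball : ∀ n, θs n ∈ closedBall (0 : EuclideanSpace ℝ (Fin d)) 1 := by
          intro n
          rw [mem_closedBall, dist_zero_right, hθs1 n]
        obtain ⟨θ, hθcl, φ, hφ, hθt⟩ := tendsto_subseq_of_bounded isBounded_closedBall hθsball
        have htφ : Tendsto (fun n => t (φ n)) atTop (𝓝 0) := httend.comp hφ.tendsto_atTop
        -- ps ∘ φ → x
        have hps_tend : Tendsto (fun n => ps (φ n)) atTop (𝓝 x) := by
          rw [tendsto_iff_dist_tendsto_zero]
          have hb : ∀ n, dist (ps (φ n)) x ≤ 2 * t (φ n) := by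
            intro n
            rw [dist_eq_norm]
            exact hebound (φ n)
          have hg : Tendsto (fun n => 2 * t (φ n)) atTop (𝓝 0) := by
            simpa using htφ.const_mul 2
          exact squeeze_zero (fun n => dist_nonneg) hb hg
        -- perpendicularity of the limit direction
        have hperpθ : (inner ℝ u θ : ℝ) = 0 := by
          apply aux_dir hM hx hperp (p := fun n => ps (φ n)) (fun n => hpsM (φ n))
            (fun n => hpsne (φ n)) hps_tend
          exact hθt
        have huuθ : (inner ℝ uu θ : ℝ) = 0 := by
          rw [huudef, real_inner_smul_left, hperpθ, mul_zero]
        -- δ n := ‖e n‖ / t n → 0 along φ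
        have hδ : Tendsto (fun n => ‖e (φ n)‖ / t (φ n)) atTop (𝓝 0) := by
          have hbnd : ∀ n, ‖e (φ n)‖ / t (φ n) ≤ 2 * (inner ℝ uu (θs (φ n)) : ℝ) := by
            intro n
            set m := φ n
            have h1 : (inner ℝ uu (e m) : ℝ) = ‖e m‖ * (inner ℝ uu (θs m) : ℝ) := by
              show _ = ‖e m‖ * (inner ℝ uu (‖e m‖⁻¹ • e m) : ℝ)
              rw [real_inner_smul_right, ← mul_assoc, mul_inv_cancel₀ (henorm m).ne', one_mul]
            have h2 := hA m
            rw [h1] at h2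
            rw [div_le_iff₀ (ht0 m)]
            nlinarith [henorm m, ht0 m]
          have hinner_tend : Tendsto (fun n => 2 * (inner ℝ uu (θs (φ n)) : ℝ)) atTop (𝓝 0) := by
            have h3 : Tendsto (fun n => (inner ℝ uu (θs (φ n)) : ℝ)) atTop (𝓝 (inner ℝ uu θ : ℝ)) :=
              Tendsto.inner tendsto_const_nhds hθt
            rw [huuθ] at h3
            have := h3.const_mul 2
            simpa using this
          exact squeeze_zero (fun n => div_nonneg (norm_nonneg _) (ht0 (φ n)).le) hbnd hinner_tend
        -- f n := dist (q n) (ps n)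
        set fs : ℕ → ℝ := fun n => dist (q n) (ps n) with hfsdef
        have hfs_le : ∀ n, fs n ≤ t n := by
          intro n
          show dist (q n) (ps n) ≤ t n
          rw [hpsd n]; exact hqinf_le n
        have hfs_ge : ∀ n, t n - ‖e n‖ ≤ fs n := by
          intro n
          have h1 : dist (q n) x ≤ dist (q n) (ps n) + dist (ps n) x := dist_triangle _ _ _
          rw [hdq n] at h1
          have h2 : dist (ps n) x = ‖e n‖ := by rw [hedef, dist_eq_norm]
          rw [h2] at h1
          show t n - ‖e n‖ ≤ dist (q n) (ps n)
          linarith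
        -- ratio fs / t → 1
        have hratio : Tendsto (fun n => fs (φ n) / t (φ n)) atTop (𝓝 1) := by
          refine tendsto_of_tendsto_of_tendsto_of_le_of_le
            (g := fun n => 1 - ‖e (φ n)‖ / t (φ n)) (h := fun _ => (1:ℝ))
            ?_ tendsto_const_nhds ?_ ?_
          · have := hδ.const_sub 1
            simpa using this
          · intro n
            rw [le_div_iff₀ (ht0 (φ n))]
            have h5 := hfs_ge (φ n)
            have h6 : (1 - ‖e (φ n)‖ / t (φ n)) * t (φ n) = t (φ n) - ‖e (φ n)‖ := by
              rw [sub_mul, one_mul, div_mul_cancel₀ _ (ht0 (φ n)).ne']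
            rw [h6]
            exact h5
          · intro n
            rw [div_le_one (ht0 (φ n))]
            exact hfs_le (φ n)
        have hinv_ratio : Tendsto (fun n => t (φ n) / fs (φ n)) atTop (𝓝 1) := by
          have h1 : Tendsto (fun n => (fs (φ n) / t (φ n))⁻¹) atTop (𝓝 1⁻¹) :=
            hratio.inv₀ one_ne_zero
          rw [inv_one] at h1
          refine h1.congr fun n => ?_
          rw [inv_div]
        -- eventually fs > 0
        have hfs_evpos : ∀ᶠ n in atTop, 0 < fs (φ n) := by
          have hhalf : ∀ᶠ n in atTop, fs (φ n) / t (φ n) > 1/2 := by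
            have := hratio.eventually_const_lt (by norm_num : (1:ℝ)/2 < 1)
            exact this
          filter_upwards [hhalf] with n hn
          by_contra hcon
          push_neg at hcon
          have : fs (φ n) / t (φ n) ≤ 0 := div_nonpos_of_nonpos_of_nonneg hcon (ht0 (φ n)).le
          linarith
        -- the far points b n
        set bb : ℕ → EuclideanSpace ℝ (Fin d) :=
          fun n => ps n + (R / dist (q n) (ps n)) • (q n - ps n) with hbbdef
        have hbbinf : ∀ᶠ n in atTop, Metric.infDist (bb (φ n)) M = R := by
          filter_upwards [hfs_evpos] with n hn
          have h0 : 0 < dist (q (φ n)) (ps (φ n)) := hn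
          exact aux_ray hne hρ hMc (hpsM (φ n)) (hpsd (φ n)).symm h0
            (le_trans (hfs_le (φ n)) (htR (φ n))) hρu
        -- bb ∘ φ → x + u
        have hbb_tend : Tendsto (fun n => bb (φ n)) atTop (𝓝 (x + u)) := by
          have hqps : ∀ n, q n - ps n = t n • uu - e n := by
            intro n; rw [hqdef, hedef]; module
          have hrew : ∀ n, (R / fs n) • (q n - ps n) =
              R • ((t n / fs n) • uu - (fs n)⁻¹ • e n) := by
            intro n
            rw [hqps n]
            module
          have h1 : Tendsto (fun n => (t (φ n) / fs (φ n)) • uu) atTop (𝓝 ((1:ℝ) • uu)) :=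
            hinv_ratio.smul_const uu
          have h2 : Tendsto (fun n => (fs (φ n))⁻¹ • e (φ n)) atTop
              (𝓝 (0 : EuclideanSpace ℝ (Fin d))) := by
            rw [tendsto_zero_iff_norm_tendsto_zero]
            apply squeeze_zero' (Eventually.of_forall fun n => norm_nonneg _)
              (g := fun n => (‖e (φ n)‖ / t (φ n)) * (t (φ n) / fs (φ n)))
            · filter_upwards [hfs_evpos] with n hn
              rw [norm_smul, Real.norm_eq_abs, abs_inv, abs_of_pos hn]
              rw [div_mul_div_comm, inv_mul_eq_div]
              apply le_of_eq
              rw [mul_comm (t (φ n)) (fs (φ n))]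
              rw [mul_div_mul_right _ _ (ht0 (φ n)).ne']
            · have := hδ.mul hinv_ratio
              simpa using this
          have hw : Tendsto
              (fun n => (R / fs (φ n)) • (q (φ n) - ps (φ n))) atTop (𝓝 u) := by
            have h3 : Tendsto (fun n => R • ((t (φ n) / fs (φ n)) • uu - (fs (φ n))⁻¹ • e (φ n)))
                atTop (𝓝 (R • ((1:ℝ) • uu - 0))) := (h1.sub h2).const_smul R
            have h4 : R • ((1:ℝ) • uu - (0 : EuclideanSpace ℝ (Fin d))) = u := by
              rw [one_smul, sub_zero, hRu]
            rw [h4] at h3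
            exact h3.congr fun n => (hrew (φ n)).symm
          have : Tendsto (fun n => ps (φ n) + (R / fs (φ n)) • (q (φ n) - ps (φ n)))
              atTop (𝓝 (x + u)) := hps_tend.add hw
          exact this
        -- conclude: infDist (x+u) M = R
        have hge : ∀ w ∈ M, R ≤ dist (x + u) w := by
          intro w hw'
          have htendd : Tendsto (fun n => dist (bb (φ n)) w) atTop (𝓝 (dist (x + u) w)) :=
            hbb_tend.dist tendsto_const_nhds
          apply ge_of_tendsto htendd
          filter_upwards [hbbinf] with n hn
          have := Metric.infDist_le_dist_of_mem (x := bb (φ n)) hw'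
          rwa [hn] at this
        have hgeinf : R ≤ Metric.infDist (x + u) M := by
          by_contra hcon
          push_neg at hcon
          obtain ⟨w, hwM, hwlt⟩ := (Metric.infDist_lt_iff hne).mp hcon
          exact absurd hwlt (not_lt.mpr (hge w hwM))
        have hle : Metric.infDist (x + u) M ≤ R := by
          have := Metric.infDist_le_dist_of_mem (x := x + u) hx
          rwa [hdxu] at this
        exact le_antisymm hle hgeinf
  -- assemble the final statement
  have htube : Metric.infDist (x + u) M < ρ := by rw [hstar]; exact hρu
  have hUN := hρ (x + u) htube
  refine ⟨hUN, hstar, ?_⟩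
  obtain ⟨p, ⟨hpM, hpd⟩, hup⟩ := hUN
  intro y hy hdy
  have h1 : y = p := hup y ⟨hy, hdy⟩
  have h2 : x = p := hup x ⟨hx, by rw [hdxu, hstar]⟩
  rw [h1, ← h2]
end
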